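/- The reduction ▷_{βΩ}* satisfies the Church–Rosser property: if t ▷_{βΩ}* t₁ and t ▷_{βΩ}* t₂, then there is a term t₃ such that t₁ ▷_{βΩ}* t₃ and t₂ ▷_{βΩ}* t₃. -/

import Mathlib

/-! ## A de Bruijn presentation of the untyped λ-calculus -/

/-- Untyped λ-terms in de Bruijn representation. -/
inductive Lam : Type where
  | var : ℕ → Lam
  | app : Lam → Lam → Lam
  | abs : Lam → Lam
  deriving DecidableEq

namespace Lam

/-- Lifting of de Bruijn indices (cutoff `d`). -/
def lift (d : ℕ) : Lam → Lam
  | var n => if n < d then var n else var (n + 1)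
  | app a b => app (lift d a) (lift d b)
  | abs a => abs (lift (d + 1) a)

/-- Capture-avoiding substitution of `u` for the free variable `k`. -/
def subst : Lam → ℕ → Lam → Lam
  | var n, k, u => if n = k then u else if k < n then var (n - 1) else var n
  | app a b, k, u => app (subst a k u) (subst b k u)
  | abs a, k, u => abs (subst a (k + 1) (lift 0 u))

/-- One-step β-reduction `▷`. -/
inductive Step : Lam → Lam → Prop
  | beta (a b : Lam) : Step (app (abs a) b) (subst a 0 b)
  | appL {a a' : Lam} (b : Lam) : Step a a' → Step (app a b) (app a' b)
  | appR (a : Lam) {b b' : Lam} : Step b b' → Step (app a b) (app a b')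
  | abs {a a' : Lam} : Step a a' → Step (Lam.abs a) (Lam.abs a')

/-- β-reduction `▷*` : reflexive and transitive closure of `▷`. -/
def Steps : Lam → Lam → Prop := Relation.ReflTransGen Step

/-- β-normal term. -/
def Normal (t : Lam) : Prop := ∀ t', ¬ Step t t'

/-- `Free x t` : the variable `x` (de Bruijn index, seen from the root) occurs free in `t`. -/
def Free : ℕ → Lam → Prop
  | x, var n => x = n
  | x, app a b => Free x a ∨ Free x b
  | x, abs a => Free (x + 1) a

/-- Closed term. -/
def Closed (t : Lam) : Prop := ∀ x, ¬ Free x t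

/-- A variable applied to a (possibly empty) list of arguments. -/
inductive HeadVarApp : Lam → Prop
  | var (n : ℕ) : HeadVarApp (var n)
  | app {a : Lam} (b : Lam) : HeadVarApp a → HeadVarApp (app a b)

/-- Head normal forms `λx₁…λxₙ.(y t₁ … tₘ)`. -/
inductive IsHNF : Lam → Prop
  | head {t : Lam} : HeadVarApp t → IsHNF t
  | abs {a : Lam} : IsHNF a → IsHNF (Lam.abs a)

/-- A term is solvable if it β-reduces to a head normal form. -/
def Solvable (t : Lam) : Prop := ∃ h, Steps t h ∧ IsHNF h

/-- `Ω = (λx.(x x))(λx.(x x))`. -/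
def Omega : Lam := app (abs (app (var 0) (var 0))) (abs (app (var 0) (var 0)))

/-- Ω-reduction `▷_Ω` : replace an unsolvable subterm by `Ω`. -/
inductive OmegaStep : Lam → Lam → Prop
  | unsolv {t : Lam} : ¬ Solvable t → OmegaStep t Omega
  | appL {a a' : Lam} (b : Lam) : OmegaStep a a' → OmegaStep (app a b) (app a' b)
  | appR (a : Lam) {b b' : Lam} : OmegaStep b b' → OmegaStep (app a b) (app a b')
  | abs {a a' : Lam} : OmegaStep a a' → OmegaStep (Lam.abs a) (Lam.abs a')

/-- `▷_Ω*`. -/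
def OmegaSteps : Lam → Lam → Prop := Relation.ReflTransGen OmegaStep

/-- `▷_{βΩ}` : union of `▷` and `▷_Ω`. -/
def BOStep (t t' : Lam) : Prop := Step t t' ∨ OmegaStep t t'

/-- `▷_{βΩ}*`. -/
def BOSteps : Lam → Lam → Prop := Relation.ReflTransGen BOStep

/-- `u ≃ v` : equality in the λ-theory H (common `▷_{βΩ}*`-reduct). -/
def SimH (u v : Lam) : Prop := ∃ w, BOSteps u w ∧ BOSteps v w

/-- Simultaneous (parallel) substitution along `σ`. -/
def psubst (σ : ℕ → Lam) : Lam → Lam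
  | var n => σ n
  | app a b => app (psubst σ a) (psubst σ b)
  | abs a => abs (psubst (fun n => match n with | 0 => var 0 | m + 1 => lift 0 (σ m)) a)

/-- `(x V)` : the application of a head `h` to a list of arguments. -/
def mkApps (h : Lam) (as : List Lam) : Lam := as.foldl app h

/-- `U ⊑ V` : some initial segment of `V` is obtained from `U` by a substitution
followed by componentwise β-reductions. -/
def Sqsubseteq (U V : List Lam) : Prop :=
  ∃ (σ : ℕ → Lam) (W : List Lam), W <+: V ∧
    List.Forall₂ (fun u w => Steps (psubst σ u) w) U W

/-! ### Occurrences as positions -/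

/-- Directions inside a term. -/
inductive Dir : Type where
  | left | right | down
  deriving DecidableEq

/-- Positions (occurrences) in a term. -/
abbrev Pos := List Dir

/-- The subterm of `t` at position `p` (if any). -/
def subtermAt : Lam → Pos → Option Lam
  | t, [] => some t
  | app a _, Dir.left :: p => subtermAt a p
  | app _ b, Dir.right :: p => subtermAt b p
  | abs a, Dir.down :: p => subtermAt a p
  | _, _ :: _ => none

/-- Replace the subterm of `t` at position `p` by `s` (if the position exists). -/
def replaceAt : Lam → Pos → Lam → Option Lam
  | _, [], s => some s
  | app a b, Dir.left :: p, s => (replaceAt a p s).map (fun a' => app a' b)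
  | app a b, Dir.right :: p, s => (replaceAt b p s).map (fun b' => app a b')
  | abs a, Dir.down :: p, s => (replaceAt a p s).map Lam.abs
  | _, _ :: _, _ => none

/-- `OccOf x t p` : position `p` is an occurrence in `t` of the free variable `x`
(index seen from the root, hence shifted by the number of binders crossed). -/
def OccOf (x : ℕ) (t : Lam) (p : Pos) : Prop :=
  subtermAt t p = some (var (x + p.count Dir.down))

/-- `ArgOf t p V` : `V` is the maximal list of arguments, in `t`, of the occurrence
sitting at position `p`; i.e. `([] V)` is the applicative context of that occurrence. -/
def ArgOf (t : Lam) (p : Pos) (V : List Lam) : Prop :=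
  ∃ (q : Pos) (h : Lam),
    p = q ++ List.replicate V.length Dir.left ∧
    (∀ q' : Pos, q ≠ q' ++ [Dir.left]) ∧
    subtermAt t q = some (mkApps h V) ∧ subtermAt t p = some h

/-- `InArgOfOcc x t p q` : `q` is an occurrence of `x` in `t` and the position `p` lies
inside one of the elements of `Arg(x_[q], t)`. -/
def InArgOfOcc (x : ℕ) (t : Lam) (p q : Pos) : Prop :=
  OccOf x t q ∧ ∃ (r : Pos) (n : ℕ),
    q = r ++ List.replicate n Dir.left ∧
    (∀ r' : Pos, r ≠ r' ++ [Dir.left]) ∧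
    ∃ (j : ℕ) (s : Pos), j < n ∧ p = r ++ List.replicate j Dir.left ++ Dir.right :: s

/-- The occurrence `p` of `x` is pure in `t` : no other occurrence `q` of `x` in `t`
is such that `p` occurs in one of the elements of `Arg(x_[q], t)`. -/
def PureOcc (x : ℕ) (t : Lam) (p : Pos) : Prop :=
  OccOf x t p ∧ ∀ q, q ≠ p → ¬ InArgOfOcc x t p q

/-- Renaming of the free variable `y` into `x`. -/
def rename (y x : ℕ) : Lam → Lam
  | var n => if n = y then var x else var n
  | app a b => app (rename y x a) (rename y x b)
  | abs a => abs (rename (y + 1) (x + 1) a)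

/-- `Residue x u v p p'` : along some β-reduction from `u` to `v`, the occurrence `p'` of
`x` in `v` is a residue (traced copy) of the occurrence `p` of `x` in `u`.  This is
expressed by marking the occurrence `p` of `x` with a fresh variable `y` and tracing the
occurrences of `y`. -/
def Residue (x : ℕ) (u v : Lam) (p p' : Pos) : Prop :=
  ∃ (y : ℕ) (u₀ v₀ : Lam),
    ¬ Free y u ∧
    replaceAt u p (var (y + p.count Dir.down)) = some u₀ ∧
    Steps u₀ v₀ ∧ rename y x v₀ = v ∧ OccOf y v₀ p'

/-- The occurrence `p` of the free variable `0` ("x") in `G` is good with respect to the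
closed term `A` : it is pure in `G` and `u[x:=A]` is solvable for every subterm `u` of
`G` in which this occurrence occurs. -/
def GoodOcc (A G : Lam) (p : Pos) : Prop :=
  PureOcc 0 G p ∧
    ∀ (q : Pos) (u : Lam), q <+: p → subtermAt G q = some u →
      Solvable (subst u (q.count Dir.down) A)

/-! ### Miscellaneous -/

/-- A fixed effective Gödel numbering of λ-terms. -/
def code : Lam → ℕ
  | var n => Nat.pair 0 n
  | app a b => Nat.pair 1 (Nat.pair (code a) (code b))
  | abs a => Nat.pair 2 (code a)

/-- Body `f^k z` of the Church numeral. -/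
def churchBody : ℕ → Lam
  | 0 => var 0
  | k + 1 => app (var 1) (churchBody k)

/-- The Church numeral `c_k = λf λz.(f^k z)`. -/
def church (k : ℕ) : Lam := abs (abs (churchBody k))

/-- `n`-fold abstraction `λx₁…λxₙ.t`. -/
def absN : ℕ → Lam → Lam
  | 0, t => t
  | n + 1, t => abs (absN n t)

/-- Number of symbols of a term. -/
def size : Lam → ℕ
  | var _ => 1
  | app a b => size a + size b + 1
  | abs a => size a + 1

/-- Subterm relation. -/
inductive Subterm : Lam → Lam → Prop
  | refl (t : Lam) : Subterm t t
  | appL {s a : Lam} (b : Lam) : Subterm s a → Subterm s (app a b)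
  | appR (a : Lam) {s b : Lam} : Subterm s b → Subterm s (app a b)
  | abs {s a : Lam} : Subterm s a → Subterm s (Lam.abs a)

/-- `t` contains no subterm of the form `(x u)` for the free variable `x`. -/
def NoVarApp : ℕ → Lam → Prop
  | _, var _ => True
  | x, app a b => a ≠ var x ∧ NoVarApp x a ∧ NoVarApp x b
  | x, abs a => NoVarApp (x + 1) a

/-- Headed by the variable `d` : term of the form `(x V)` with `x = var d`. -/
inductive Headed : ℕ → Lam → Prop
  | var (d : ℕ) : Headed d (var d)
  | app {d : ℕ} {a : Lam} (b : Lam) : Headed d a → Headed d (app a b)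

end Lam

namespace Lam

/-! ### Substitution machinery -/

/-- Shifted substitution used under binders. -/
def upE (σ : ℕ → Lam) : ℕ → Lam :=
  fun n => match n with
  | 0 => var 0
  | m + 1 => lift 0 (σ m)

/-- Shifted renaming. -/
def upr (ρ : ℕ → ℕ) : ℕ → ℕ :=
  fun n => match n with
  | 0 => 0
  | m + 1 => ρ m + 1

theorem psubst_abs (σ : ℕ → Lam) (a : Lam) :
    psubst σ (abs a) = abs (psubst (upE σ) a) := rfl

theorem psubst_congr {σ σ' : ℕ → Lam} (h : ∀ n, σ n = σ' n) :
    ∀ t, psubst σ t = psubst σ' t := by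
  intro t
  induction t generalizing σ σ' with
  | var n => simpa [psubst] using h n
  | app a b iha ihb => simp [psubst, iha h, ihb h]
  | abs a ih =>
      simp only [psubst]
      congr 1
      apply ih
      intro n
      cases n with
      | zero => rfl
      | succ m => simp [h m]

theorem lift_eq_psubst (t : Lam) : ∀ d,
    lift d t = psubst (fun n => if n < d then var n else var (n + 1)) t := by
  induction t with
  | var n => intro d; by_cases h : n < d <;> simp [lift, psubst, h]
  | app a b iha ihb => intro d; simp [lift, psubst, iha, ihb]
  | abs a ih =>
      intro d
      simp only [lift, psubst]
      congr 1
      rw [ih (d+1)]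
      apply psubst_congr
      intro n
      cases n with
      | zero => simp [upE]
      | succ m =>
          simp only [upE]
          by_cases h : m < d
          · rw [if_pos h, if_pos (by omega), lift]; simp
          · rw [if_neg h, if_neg (by omega), lift]; simp

theorem lift0_eq (u : Lam) : lift 0 u = psubst (fun n => var (n + 1)) u := by
  rw [lift_eq_psubst]; apply psubst_congr; intro n; simp

theorem upE_ren (ρ : ℕ → ℕ) (n : ℕ) :
    upE (fun k => var (ρ k)) n = var (upr ρ n) := by
  cases n with
  | zero => rfl
  | succ m => simp [upE, upr, lift]

/-- Substitution after renaming. -/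
theorem sub_ren (t : Lam) : ∀ (ρ : ℕ → ℕ) (σ : ℕ → Lam),
    psubst σ (psubst (fun n => var (ρ n)) t) = psubst (fun n => σ (ρ n)) t := by
  induction t with
  | var n => intro ρ σ; simp [psubst]
  | app a b iha ihb => intro ρ σ; simp [psubst, iha, ihb]
  | abs a ih =>
      intro ρ σ
      simp only [psubst]
      congr 1
      show psubst (upE σ) (psubst (upE fun n => var (ρ n)) a) = psubst (upE fun n => σ (ρ n)) a
      rw [psubst_congr (upE_ren ρ) a, ih]
      apply psubst_congr
      intro n
      cases n with
      | zero => rfl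
      | succ m => simp [upE, upr]

/-- Renaming after substitution. -/
theorem ren_sub (t : Lam) : ∀ (σ : ℕ → Lam) (ρ : ℕ → ℕ),
    psubst (fun n => var (ρ n)) (psubst σ t)
      = psubst (fun n => psubst (fun k => var (ρ k)) (σ n)) t := by
  induction t with
  | var n => intro σ ρ; simp [psubst]
  | app a b iha ihb => intro σ ρ; simp [psubst, iha, ihb]
  | abs a ih =>
      intro σ ρ
      simp only [psubst]
      congr 1
      show psubst (upE fun n => var (ρ n)) (psubst (upE σ) a)
          = psubst (upE fun n => psubst (fun k => var (ρ k)) (σ n)) a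
      rw [psubst_congr (upE_ren ρ) (psubst (upE σ) a), ih]
      apply psubst_congr
      intro n
      cases n with
      | zero => rfl
      | succ m =>
          show psubst (fun k => var (upr ρ k)) (lift 0 (σ m))
              = lift 0 (psubst (fun k => var (ρ k)) (σ m))
          rw [lift0_eq (σ m), lift0_eq (psubst _ (σ m)), sub_ren, sub_ren]
          apply psubst_congr
          intro k
          simp [upr]

/-- Composition of substitutions. -/
theorem sub_sub (t : Lam) : ∀ (σ₁ σ₂ : ℕ → Lam),
    psubst σ₂ (psubst σ₁ t) = psubst (fun n => psubst σ₂ (σ₁ n)) t := by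
  induction t with
  | var n => intro σ₁ σ₂; simp [psubst]
  | app a b iha ihb => intro σ₁ σ₂; simp [psubst, iha, ihb]
  | abs a ih =>
      intro σ₁ σ₂
      simp only [psubst]
      congr 1
      show psubst (upE σ₂) (psubst (upE σ₁) a) = psubst (upE fun n => psubst σ₂ (σ₁ n)) a
      rw [ih]
      apply psubst_congr
      intro n
      cases n with
      | zero => rfl
      | succ m =>
          show psubst (upE σ₂) (lift 0 (σ₁ m)) = lift 0 (psubst σ₂ (σ₁ m))
          rw [lift0_eq (σ₁ m), sub_ren, lift0_eq (psubst σ₂ (σ₁ m)), ren_sub]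
          apply psubst_congr
          intro k
          show upE σ₂ (k + 1) = psubst (fun j => var (j + 1)) (σ₂ k)
          rw [← lift0_eq]
          rfl

theorem psubst_id (t : Lam) : psubst (fun n => var n) t = t := by
  induction t with
  | var n => rfl
  | app a b iha ihb => simp [psubst, iha, ihb]
  | abs a ih =>
      simp only [psubst]
      congr 1
      rw [psubst_congr (σ' := fun n => var n) _ a, ih]
      intro n
      cases n with
      | zero => rfl
      | succ m => simp [upE, lift]

theorem subst_eq_psubst (t : Lam) : ∀ (k : ℕ) (u : Lam),
    subst t k u = psubst (fun n => if n = k then u else if k < n then var (n - 1) else var n) t := by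
  induction t with
  | var n => intro k u; simp [subst, psubst]
  | app a b iha ihb => intro k u; simp [subst, psubst, iha, ihb]
  | abs a ih =>
      intro k u
      simp only [subst, psubst]
      congr 1
      rw [ih]
      apply psubst_congr
      intro n
      cases n with
      | zero => simp [upE]
      | succ m =>
          show _ = lift 0 (if m = k then u else if k < m then var (m - 1) else var m)
          by_cases h1 : m = k
          · subst h1; simp [lift]
          · by_cases h2 : k < m
            · rw [if_neg (show ¬ m + 1 = k + 1 by omega), if_pos (show k + 1 < m + 1 by omega),
                if_neg h1, if_pos h2]
              show var (m + 1 - 1) = lift 0 (var (m - 1))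
              simp only [lift, Nat.not_lt_zero, if_neg]
              congr 1
              omega
            · rw [if_neg (show ¬ m + 1 = k + 1 by omega), if_neg (show ¬ k + 1 < m + 1 by omega),
                if_neg h1, if_neg h2]
              simp [lift]

end Lam
namespace Lam

theorem lift_eq_ren (t : Lam) (d : ℕ) :
    lift d t = psubst (fun n => var (if n < d then n else n + 1)) t := by
  rw [lift_eq_psubst]
  apply psubst_congr
  intro n
  split <;> rfl

theorem lift_psubst (t : Lam) (σ : ℕ → Lam) (d : ℕ) :
    lift d (psubst σ t) = psubst (fun n => lift d (σ n)) t := by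
  rw [lift_eq_ren, ren_sub]
  apply psubst_congr
  intro n
  rw [← lift_eq_ren]

theorem lift_lift0 (x : Lam) (d : ℕ) :
    lift (d + 1) (lift 0 x) = lift 0 (lift d x) := by
  rw [lift0_eq x, lift_eq_ren (psubst (fun n => var (n + 1)) x) (d + 1), sub_ren,
    lift_eq_ren x d, lift0_eq (psubst (fun n => var (if n < d then n else n + 1)) x), sub_ren]
  apply psubst_congr
  intro n
  split_ifs <;> first | rfl | (congr 1; omega)

theorem subst_lift (a b : Lam) (d : ℕ) :
    lift d (subst a 0 b) = subst (lift (d + 1) a) 0 (lift d b) := by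
  rw [subst_eq_psubst a 0 b, lift_psubst, lift_eq_ren a (d + 1),
    subst_eq_psubst (psubst _ a) 0 (lift d b), sub_ren]
  apply psubst_congr
  intro n
  cases n with
  | zero => simp
  | succ m =>
      rw [if_neg (Nat.succ_ne_zero m), if_pos (Nat.succ_pos m)]
      simp only [Nat.add_sub_cancel]
      by_cases h : m < d
      · rw [if_pos (show m + 1 < d + 1 by omega),
          if_neg (Nat.succ_ne_zero m), if_pos (Nat.succ_pos m)]
        simp [lift, if_pos h]
      · rw [if_neg (show ¬ m + 1 < d + 1 by omega),
          if_neg (show m + 1 + 1 ≠ 0 by omega), if_pos (show 0 < m + 1 + 1 by omega)]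
        simp [lift, if_neg h]

theorem subst_subst (a b c : Lam) (k : ℕ) :
    subst (subst a 0 b) k c = subst (subst a (k + 1) (lift 0 c)) 0 (subst b k c) := by
  rw [subst_eq_psubst a 0 b, subst_eq_psubst (psubst _ a) k c, sub_sub,
    subst_eq_psubst a (k + 1) (lift 0 c), subst_eq_psubst (psubst _ a) 0 (subst b k c), sub_sub]
  apply psubst_congr
  intro n
  cases n with
  | zero =>
      rw [if_pos rfl, if_neg (show ¬ (0 : ℕ) = k + 1 by omega), if_neg (show ¬ k + 1 < 0 by omega)]
      show psubst _ b = psubst _ (var 0)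
      rw [show psubst (fun n => if n = 0 then subst b k c else if 0 < n then var (n - 1) else var n)
          (var 0) = subst b k c from by simp [psubst], ← subst_eq_psubst]
  | succ m =>
      rw [if_neg (Nat.succ_ne_zero m), if_pos (Nat.succ_pos m)]
      simp only [Nat.add_sub_cancel]
      show psubst _ (var m) = _
      by_cases h1 : m = k
      · subst h1
        rw [if_pos rfl]
        rw [show psubst (fun n => if n = m then c else if m < n then var (n - 1) else var n)
            (var m) = c from by simp [psubst]]
        rw [lift0_eq, sub_ren]
        rw [psubst_congr (σ' := fun n => var n) (fun n => by
              rw [if_neg (Nat.succ_ne_zero n), if_pos (Nat.succ_pos n)]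
              simp) c, psubst_id]
      · by_cases h2 : k < m
        · rw [if_neg (show ¬ m + 1 = k + 1 by omega), if_pos (show k + 1 < m + 1 by omega)]
          rw [show psubst (fun n => if n = k then c else if k < n then var (n - 1) else var n)
              (var m) = var (m - 1) from by simp [psubst, if_neg h1, if_pos h2]]
          rw [show psubst (fun n => if n = 0 then subst b k c else
              if 0 < n then var (n - 1) else var n) (var m) = var (m - 1) from by
            simp only [psubst]
            rw [if_neg (show ¬ m = 0 by omega), if_pos (show 0 < m by omega)]]
        · rw [if_neg (show ¬ m + 1 = k + 1 by omega), if_neg (show ¬ k + 1 < m + 1 by omega)]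
          rw [show psubst (fun n => if n = k then c else if k < n then var (n - 1) else var n)
              (var m) = var m from by simp [psubst, if_neg h1, if_neg h2]]
          rw [show psubst (fun n => if n = 0 then subst b k c else
              if 0 < n then var (n - 1) else var n) (var (m + 1)) = var m from by
            simp [psubst, if_neg (Nat.succ_ne_zero m), if_pos (Nat.succ_pos m)]]

/-- Cons of a term onto a substitution. -/
def scons (v : Lam) (θ : ℕ → Lam) : ℕ → Lam :=
  fun n => match n with
  | 0 => v
  | m + 1 => θ m

theorem cons_subst (a v : Lam) (θ : ℕ → Lam) :
    subst (psubst (upE θ) a) 0 v = psubst (scons v θ) a := by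
  rw [subst_eq_psubst, sub_sub]
  apply psubst_congr
  intro n
  cases n with
  | zero => rfl
  | succ m =>
      show psubst _ (lift 0 (θ m)) = θ m
      rw [lift0_eq, sub_ren]
      rw [psubst_congr (σ' := fun n => var n) (fun n => by
            rw [if_neg (Nat.succ_ne_zero n), if_pos (Nat.succ_pos n)]
            simp) (θ m), psubst_id]

theorem lift_upE (a : Lam) (σ : ℕ → Lam) (d : ℕ) :
    lift (d + 1) (psubst (upE σ) a) = psubst (upE (fun n => lift d (σ n))) a := by
  rw [lift_psubst]
  apply psubst_congr
  intro n
  cases n with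
  | zero => simp [upE, lift]
  | succ m => show lift (d + 1) (lift 0 (σ m)) = lift 0 (lift d (σ m)); exact lift_lift0 _ _

theorem lift_Omega (d : ℕ) : lift d Omega = Omega := by
  simp [Omega, lift]

theorem subst_Omega (k : ℕ) (u : Lam) : subst Omega k u = Omega := by
  simp [Omega, subst, show ∀ m, ¬ (0 : ℕ) = m + 1 by omega, show ∀ m, ¬ m + 1 < 0 by omega]

end Lam
namespace Lam

/-! ### Basic facts about β-reduction and solvability -/

theorem step_lift {t t' : Lam} (h : Step t t') : ∀ d, Step (lift d t) (lift d t') := by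
  induction h with
  | beta a b => intro d; rw [subst_lift]; exact Step.beta _ _
  | appL b _ ih => intro d; exact Step.appL _ (ih d)
  | appR a _ ih => intro d; exact Step.appR _ (ih d)
  | abs _ ih => intro d; exact Step.abs (ih (d + 1))

theorem steps_lift {t t' : Lam} (h : Steps t t') (d : ℕ) : Steps (lift d t) (lift d t') := by
  induction h with
  | refl => exact Relation.ReflTransGen.refl
  | tail _ h2 ih => exact ih.tail (step_lift h2 d)

theorem hva_lift {t : Lam} (h : HeadVarApp t) : ∀ d, HeadVarApp (lift d t) := by
  induction h with
  | var n => intro d; by_cases h : n < d <;> simp [lift, h] <;> exact HeadVarApp.var _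
  | app b _ ih => intro d; exact HeadVarApp.app _ (ih d)

theorem hnf_lift {t : Lam} (h : IsHNF t) : ∀ d, IsHNF (lift d t) := by
  induction h with
  | head h => intro d; exact IsHNF.head (hva_lift h d)
  | abs _ ih => intro d; exact IsHNF.abs (ih (d + 1))

theorem steps_appL {a a' : Lam} (b : Lam) (h : Steps a a') : Steps (app a b) (app a' b) := by
  induction h with
  | refl => exact Relation.ReflTransGen.refl
  | tail _ h2 ih => exact ih.tail (Step.appL _ h2)

theorem steps_appR (a : Lam) {b b' : Lam} (h : Steps b b') : Steps (app a b) (app a b') := by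
  induction h with
  | refl => exact Relation.ReflTransGen.refl
  | tail _ h2 ih => exact ih.tail (Step.appR _ h2)

theorem steps_abs {a a' : Lam} (h : Steps a a') : Steps (abs a) (abs a') := by
  induction h with
  | refl => exact Relation.ReflTransGen.refl
  | tail _ h2 ih => exact ih.tail (Step.abs h2)

theorem steps_abs_inv {a h : Lam} (hs : Steps (abs a) h) : ∃ b, h = abs b ∧ Steps a b := by
  induction hs with
  | refl => exact ⟨a, rfl, Relation.ReflTransGen.refl⟩
  | tail _ h2 ih =>
      obtain ⟨b, rfl, hb⟩ := ih
      cases h2 with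
      | abs h3 => exact ⟨_, rfl, hb.tail h3⟩

theorem hnf_abs_inv {a : Lam} (h : IsHNF (abs a)) : IsHNF a := by
  cases h with
  | head h => cases h
  | abs h => exact h

theorem solvable_of_hnf {t : Lam} (h : IsHNF t) : Solvable t :=
  ⟨t, Relation.ReflTransGen.refl, h⟩

theorem solvable_steps_expand {t s : Lam} (hts : Steps t s) (hs : Solvable s) : Solvable t := by
  obtain ⟨h, hsh, hh⟩ := hs
  exact ⟨h, hts.trans hsh, hh⟩

theorem solvable_step_expand {t s : Lam} (hts : Step t s) (hs : Solvable s) : Solvable t :=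
  solvable_steps_expand (Relation.ReflTransGen.single hts) hs

theorem solvable_abs_iff {a : Lam} : Solvable (abs a) ↔ Solvable a := by
  constructor
  · rintro ⟨h, hs, hh⟩
    obtain ⟨b, rfl, hb⟩ := steps_abs_inv hs
    exact ⟨b, hb, hnf_abs_inv hh⟩
  · rintro ⟨h, hs, hh⟩
    exact ⟨abs h, steps_abs hs, IsHNF.abs hh⟩

theorem solvable_lift {t : Lam} (h : Solvable t) (d : ℕ) : Solvable (lift d t) := by
  obtain ⟨w, hs, hw⟩ := h
  exact ⟨lift d w, steps_lift hs d, hnf_lift hw d⟩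

/-- The body of Ω's abstractions. -/
private def OB : Lam := app (var 0) (var 0)

theorem step_omega_inv {x : Lam} (h : Step Omega x) : x = Omega := by
  have hOB : ∀ y, ¬ Step OB y := by
    intro y hy
    cases hy with
    | appL _ h' => cases h'
    | appR _ h' => cases h'
  cases h with
  | beta a b => rfl
  | appL b h' =>
      cases h' with
      | abs h'' => exact absurd h'' (hOB _)
  | appR a h' =>
      cases h' with
      | abs h'' => exact absurd h'' (hOB _)

theorem not_hva_Omega : ¬ HeadVarApp Omega := by
  intro h
  cases h with
  | app _ h' => cases h'

theorem not_hnf_Omega : ¬ IsHNF Omega := by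
  intro h
  cases h with
  | head h' => exact not_hva_Omega h'

theorem unsolvable_Omega : ¬ Solvable Omega := by
  rintro ⟨h, hs, hh⟩
  have : h = Omega := by
    clear hh
    induction hs with
    | refl => rfl
    | tail _ h2 ih => subst ih; exact step_omega_inv h2
  subst this
  exact not_hnf_Omega hh

theorem unsolvable_appOmega (b : Lam) : ¬ Solvable (app Omega b) := by
  rintro ⟨h, hs, hh⟩
  have : ∃ b', h = app Omega b' := by
    clear hh
    induction hs with
    | refl => exact ⟨b, rfl⟩
    | tail _ h2 ih =>
        obtain ⟨b', rfl⟩ := ih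
        cases h2 with
        | appL _ h' => exact ⟨b', by rw [step_omega_inv h']⟩
        | appR _ h' => exact ⟨_, rfl⟩
  obtain ⟨b', rfl⟩ := this
  cases hh with
  | head h' => cases h' with | app _ h'' => exact not_hva_Omega h''

theorem solvable_var (n : ℕ) : Solvable (var n) :=
  solvable_of_hnf (IsHNF.head (HeadVarApp.var n))

end Lam
namespace Lam

/-! ### An intersection type system characterizing solvability -/

/-- Strict intersection types. -/
inductive Ty : Type where
  | atom : Ty
  | arr : List Ty → Ty → Ty

/-- Typing contexts. -/
abbrev Ctx := ℕ → List Ty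

/-- Cons onto a context. -/
def consC (L : List Ty) (Γ : Ctx) : Ctx :=
  fun n => match n with
  | 0 => L
  | m + 1 => Γ m

/-- Insert a slot into a context. -/
def insC (k : ℕ) (L : List Ty) (Γ : Ctx) : Ctx :=
  fun n => if n < k then Γ n else if n = k then L else Γ (n - 1)

/-- The typing judgement. -/
inductive TJ : Ctx → Lam → Ty → Prop where
  | var {Γ : Ctx} {n : ℕ} {τ : Ty} : τ ∈ Γ n → TJ Γ (var n) τ
  | app {Γ : Ctx} {a b : Lam} {L : List Ty} {τ : Ty} :
      TJ Γ a (Ty.arr L τ) → (∀ σ ∈ L, TJ Γ b σ) → TJ Γ (app a b) τ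
  | abs {Γ : Ctx} {a : Lam} {L : List Ty} {τ : Ty} :
      TJ (consC L Γ) a τ → TJ Γ (abs a) (Ty.arr L τ)

/-- Typability. -/
def Typable (t : Lam) : Prop := ∃ Γ τ, TJ Γ t τ

theorem TJ.mono {Γ Γ' : Ctx} {t : Lam} {τ : Ty} (h : TJ Γ t τ)
    (hm : ∀ n, Γ n ⊆ Γ' n) : TJ Γ' t τ := by
  induction h generalizing Γ' with
  | var h => exact TJ.var (hm _ h)
  | app _ _ iha ihb => exact TJ.app (iha hm) (fun σ hσ => ihb σ hσ hm)
  | abs _ ih =>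
      refine TJ.abs (ih ?_)
      intro n
      cases n with
      | zero => exact fun x hx => hx
      | succ m => exact hm m

theorem anti_lift {t : Lam} : ∀ {Γ : Ctx} {τ : Ty} {d : ℕ},
    TJ Γ (lift d t) τ → TJ (fun n => Γ (if n < d then n else n + 1)) t τ := by
  induction t with
  | var n =>
      intro Γ τ d h
      by_cases hd : n < d
      · rw [lift, if_pos hd] at h
        cases h with
        | var h => exact TJ.var (by simpa [hd] using h)
      · rw [lift, if_neg hd] at h
        cases h with
        | var h => exact TJ.var (by simpa [hd] using h)
  | app a b iha ihb =>
      intro Γ τ d h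
      rw [lift] at h
      cases h with
      | app ha hb => exact TJ.app (iha ha) (fun σ hσ => ihb (hb σ hσ))
  | abs a ih =>
      intro Γ τ d h
      rw [lift] at h
      cases h with
      | @abs _ _ L τ₀ ha =>
          refine TJ.abs ?_
          have := ih ha
          have hctx : (fun n => consC L Γ (if n < d + 1 then n else n + 1))
              = consC L (fun n => Γ (if n < d then n else n + 1)) := by
            funext n
            cases n with
            | zero => simp [consC]
            | succ m =>
                by_cases hm : m < d
                · rw [if_pos (show m + 1 < d + 1 by omega)]
                  simp [consC, hm]
                · rw [if_neg (show ¬ m + 1 < d + 1 by omega)]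
                  simp [consC, hm]
          rwa [hctx] at this

theorem anti_lift0 {t : Lam} {Γ : Ctx} {τ : Ty} {L : List Ty}
    (h : TJ (consC L Γ) (lift 0 t) τ) : TJ Γ t τ := by
  have := anti_lift h
  have hctx : (fun n => consC L Γ (if n < 0 then n else n + 1)) = Γ := by
    funext n
    simp [consC]
  rwa [hctx] at this

theorem anti_subst {u : Lam} : ∀ {Γ : Ctx} {τ : Ty} {k : ℕ} {v : Lam},
    TJ Γ (subst u k v) τ →
    ∃ L : List Ty, TJ (insC k L Γ) u τ ∧ ∀ σ ∈ L, TJ Γ v σ := by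
  induction u with
  | var n =>
      intro Γ τ k v h
      by_cases h1 : n = k
      · subst h1
        rw [subst, if_pos rfl] at h
        refine ⟨[τ], TJ.var ?_, ?_⟩
        · simp [insC]
        · intro σ hσ
          rw [List.mem_singleton] at hσ
          subst hσ
          exact h
      · by_cases h2 : k < n
        · rw [subst, if_neg h1, if_pos h2] at h
          cases h with
          | var h =>
              refine ⟨[], TJ.var ?_, by simp⟩
              simpa [insC, if_neg (show ¬ n < k by omega), if_neg h1] using h
        · rw [subst, if_neg h1, if_neg h2] at h
          cases h with
          | var h =>
              refine ⟨[], TJ.var ?_, by simp⟩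
              simpa [insC, if_pos (show n < k by omega)] using h
  | app a b iha ihb =>
      intro Γ τ k v h
      rw [subst] at h
      cases h with
      | @app _ _ _ L₀ _ ha hb =>
          obtain ⟨L₁, ha1, hv1⟩ := iha ha
          choose f hf hv2 using fun σ (hσ : σ ∈ L₀) => ihb (hb σ hσ)
          classical
          let L₂ : List Ty := (L₀.attach.map (fun x => f x.1 x.2)).flatten
          have hsub : ∀ n, insC k L₁ Γ n ⊆ insC k (L₁ ++ L₂) Γ n := by
            intro n x hx
            simp only [insC] at hx ⊢
            split_ifs at hx ⊢ <;> first | exact hx | exact List.mem_append_left _ hx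
          have hsub2 : ∀ σ (hσ : σ ∈ L₀) n, insC k (f σ hσ) Γ n ⊆ insC k (L₁ ++ L₂) Γ n := by
            intro σ hσ n x hx
            simp only [insC] at hx ⊢
            split_ifs at hx ⊢
            · exact hx
            · refine List.mem_append_right _ ?_
              simp only [L₂, List.mem_flatten, List.mem_map]
              exact ⟨f σ hσ, ⟨⟨σ, hσ⟩, List.mem_attach _ _, rfl⟩, hx⟩
            · exact hx
          refine ⟨L₁ ++ L₂, TJ.app (ha1.mono hsub) (fun σ hσ => (hf σ hσ).mono (hsub2 σ hσ)), ?_⟩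
          intro σ hσ
          rcases List.mem_append.mp hσ with h | h
          · exact hv1 σ h
          · simp only [L₂, List.mem_flatten, List.mem_map] at h
            obtain ⟨l, ⟨⟨σ₀, hσ₀⟩, _, rfl⟩, hσl⟩ := h
            exact hv2 σ₀ hσ₀ σ hσl
  | abs a ih =>
      intro Γ τ k v h
      rw [subst] at h
      cases h with
      | @abs _ _ M τ₀ ha =>
          obtain ⟨L, ha1, hv1⟩ := ih ha
          have hctx : insC (k + 1) L (consC M Γ) = consC M (insC k L Γ) := by
            funext n
            cases n with
            | zero => simp [insC, consC]
            | succ m =>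
                simp only [insC, consC]
                by_cases hm : m < k
                · rw [if_pos (show m + 1 < k + 1 by omega), if_pos hm]
                · rw [if_neg (show ¬ m + 1 < k + 1 by omega), if_neg hm]
                  by_cases hm2 : m = k
                  · rw [if_pos (show m + 1 = k + 1 by omega), if_pos hm2]
                  · rw [if_neg (show ¬ m + 1 = k + 1 by omega), if_neg hm2]
                    have : m + 1 - 1 = (m - 1) + 1 ∨ m = 0 := by omega
                    rcases this with h | h
                    · rw [h]
                    · omega
          rw [hctx] at ha1
          exact ⟨L, TJ.abs ha1, fun σ hσ => anti_lift0 (hv1 σ hσ)⟩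

theorem tj_expand_step {t s : Lam} (h : Step t s) :
    ∀ {Γ : Ctx} {τ : Ty}, TJ Γ s τ → TJ Γ t τ := by
  induction h with
  | beta a b =>
      intro Γ τ h
      obtain ⟨L, ha, hv⟩ := anti_subst h
      have hctx : insC 0 L Γ = consC L Γ := by
        funext n
        cases n with
        | zero => simp [insC, consC]
        | succ m => simp [insC, consC]
      rw [hctx] at ha
      exact TJ.app (TJ.abs ha) hv
  | appL b _ ih =>
      intro Γ τ h
      cases h with
      | app ha hb => exact TJ.app (ih ha) hb
  | appR a _ ih =>
      intro Γ τ h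
      cases h with
      | app ha hb => exact TJ.app ha (fun σ hσ => ih (hb σ hσ))
  | abs _ ih =>
      intro Γ τ h
      cases h with
      | abs ha => exact TJ.abs (ih ha)

theorem tj_expand_steps {t s : Lam} (h : Steps t s) {Γ : Ctx} {τ : Ty}
    (hs : TJ Γ s τ) : TJ Γ t τ := by
  induction h with
  | refl => exact hs
  | tail _ h2 ih => exact ih (tj_expand_step h2 hs)

end Lam
namespace Lam

/-! ### Realizability: typable terms are solvable -/

/-- Iterated lifting. -/
def LiftC : Lam → Lam → Prop := Relation.ReflTransGen (fun u w => ∃ d, w = lift d u)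

theorem liftC_lift (t : Lam) (d : ℕ) : LiftC t (lift d t) :=
  Relation.ReflTransGen.single ⟨d, rfl⟩

mutual

/-- Realizability interpretation of types. -/
def Interp : Ty → Lam → Prop
  | Ty.atom, t => Solvable t
  | Ty.arr L τ, t => Solvable t ∧ ∀ w, LiftC t w → ∀ v, InterpL L v → Interp τ (app w v)

/-- A term realizes every type in a list. -/
def InterpL : List Ty → Lam → Prop
  | [], _ => True
  | σ :: L, v => Interp σ v ∧ InterpL L v

end

theorem interpL_iff : ∀ (L : List Ty) (v : Lam), InterpL L v ↔ ∀ σ ∈ L, Interp σ v := by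
  intro L v
  induction L with
  | nil => simp [InterpL]
  | cons σ L ih => simp [InterpL, ih]

theorem interp_solvable : ∀ (τ : Ty) {t : Lam}, Interp τ t → Solvable t
  | Ty.atom, _, h => h
  | Ty.arr _ _, _, h => h.1

theorem interp_lift {τ : Ty} {t : Lam} (h : Interp τ t) (d : ℕ) : Interp τ (lift d t) := by
  cases τ with
  | atom => exact solvable_lift h d
  | arr L τ =>
      exact ⟨solvable_lift h.1 d, fun w hw v hv => h.2 w ((liftC_lift t d).trans hw) v hv⟩

theorem liftC_step {t w : Lam} (hw : LiftC t w) {s : Lam} (h : Step t s) :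
    ∃ s', Step w s' ∧ LiftC s s' := by
  induction hw with
  | refl => exact ⟨s, h, Relation.ReflTransGen.refl⟩
  | tail _ h2 ih =>
      obtain ⟨s', hs', hc⟩ := ih
      obtain ⟨d, rfl⟩ := h2
      exact ⟨lift d s', step_lift hs' d, hc.tail ⟨d, rfl⟩⟩

theorem interp_expand : ∀ (τ : Ty) {t s : Lam}, Step t s → Interp τ s → Interp τ t
  | Ty.atom, t, s, hst, hs => solvable_step_expand hst hs
  | Ty.arr L τ, t, s, hst, hs => by
      refine ⟨solvable_step_expand hst hs.1, fun w hw v hv => ?_⟩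
      obtain ⟨s', hs', hc⟩ := liftC_step hw hst
      exact interp_expand τ (Step.appL v hs') (hs.2 s' hc v hv)

theorem hva_liftC {t w : Lam} (h : HeadVarApp t) (hw : LiftC t w) : HeadVarApp w := by
  induction hw with
  | refl => exact h
  | tail _ h2 ih => obtain ⟨d, rfl⟩ := h2; exact hva_lift ih d

theorem interp_hva : ∀ (τ : Ty) {t : Lam}, HeadVarApp t → Interp τ t
  | Ty.atom, t, h => solvable_of_hnf (IsHNF.head h)
  | Ty.arr L τ, t, h =>
      ⟨solvable_of_hnf (IsHNF.head h),
        fun w hw v _ => interp_hva τ (HeadVarApp.app v (hva_liftC h hw))⟩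

/-- Interpretation of contexts. -/
def EnvI (Γ : Ctx) (θ : ℕ → Lam) : Prop := ∀ x σ, σ ∈ Γ x → Interp σ (θ x)

theorem liftC_abs_psubst {a : Lam} {θ : ℕ → Lam} {Γ : Ctx} {w : Lam}
    (hw : LiftC (abs (psubst (upE θ) a)) w) (hθ : EnvI Γ θ) :
    ∃ θ', EnvI Γ θ' ∧ w = abs (psubst (upE θ') a) := by
  induction hw with
  | refl => exact ⟨θ, hθ, rfl⟩
  | tail _ h2 ih =>
      obtain ⟨θ', hθ', rfl⟩ := ih
      obtain ⟨d, rfl⟩ := h2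
      refine ⟨fun n => lift d (θ' n), fun x σ hσ => interp_lift (hθ' x σ hσ) d, ?_⟩
      show abs (lift (d + 1) (psubst (upE θ') a)) = _
      rw [lift_upE]

theorem fundamental {Γ : Ctx} {t : Lam} {τ : Ty} (h : TJ Γ t τ) :
    ∀ θ, EnvI Γ θ → Interp τ (psubst θ t) := by
  induction h with
  | @var Γ n τ h => exact fun θ hθ => hθ n τ h
  | @app Γ a b L τ ha hb iha ihb =>
      intro θ hθ
      have hA := iha θ hθ
      exact hA.2 (psubst θ a) Relation.ReflTransGen.refl (psubst θ b)
        ((interpL_iff L (psubst θ b)).2 (fun σ hσ => ihb σ hσ θ hθ))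
  | @abs Γ a L τ ha ih =>
      intro θ hθ
      rw [psubst_abs]
      have envcons : ∀ (v : Lam), (∀ σ ∈ L, Interp σ v) →
          EnvI (consC L Γ) (scons v (fun n => θ n)) := by
        intro v hv x σ hσ
        cases x with
        | zero => exact hv σ hσ
        | succ m => exact hθ m σ hσ
      have envcons' : ∀ (θ' : ℕ → Lam), EnvI Γ θ' → ∀ (v : Lam), (∀ σ ∈ L, Interp σ v) →
          EnvI (consC L Γ) (scons v θ') := by
        intro θ' hθ' v hv x σ hσ
        cases x with
        | zero => exact hv σ hσ
        | succ m => exact hθ' m σ hσ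
      constructor
      · -- solvability of the abstraction
        rw [solvable_abs_iff]
        have henv : EnvI (consC L Γ) (scons (var 0) (fun n => lift 0 (θ n))) := by
          intro x σ hσ
          cases x with
          | zero => exact interp_hva σ (HeadVarApp.var 0)
          | succ m => exact interp_lift (hθ m σ hσ) 0
        have := interp_solvable τ (ih _ henv)
        rwa [psubst_congr (σ' := upE θ) (fun n => by cases n <;> rfl) a] at this
      · intro w hw v hv
        obtain ⟨θ', hθ', rfl⟩ := liftC_abs_psubst hw hθ
        refine interp_expand τ (Step.beta _ _) ?_
        rw [cons_subst]
        exact ih (scons v θ') (envcons' θ' hθ' v ((interpL_iff L v).1 hv))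

theorem typable_solvable {Γ : Ctx} {t : Lam} {τ : Ty} (h : TJ Γ t τ) : Solvable t := by
  have henv : EnvI Γ (fun n => var n) := fun x σ _ => interp_hva σ (HeadVarApp.var x)
  have := interp_solvable τ (fundamental h (fun n => var n) henv)
  rwa [psubst_id] at this

/-- Head variable applications are typable with arbitrarily iterated arrow types. -/
def arrN : ℕ → Ty → Ty
  | 0, τ => τ
  | k + 1, τ => arrN k (Ty.arr [] τ)

theorem hva_tj {t : Lam} (h : HeadVarApp t) :
    ∃ n k, ∀ (τ : Ty) (Γ : Ctx), arrN k τ ∈ Γ n → TJ Γ t τ := by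
  induction h with
  | var n => exact ⟨n, 0, fun τ Γ hτ => TJ.var hτ⟩
  | app b _ ih =>
      obtain ⟨n, k, H⟩ := ih
      refine ⟨n, k + 1, fun τ Γ hτ => ?_⟩
      exact TJ.app (H (Ty.arr [] τ) Γ hτ) (fun σ hσ => by cases hσ)

theorem hnf_typable {t : Lam} (h : IsHNF t) : Typable t := by
  induction h with
  | head h =>
      obtain ⟨n, k, H⟩ := hva_tj h
      exact ⟨fun _ => [arrN k Ty.atom], Ty.atom, H Ty.atom _ (by simp)⟩
  | abs _ ih =>
      obtain ⟨Γ, τ, hj⟩ := ih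
      refine ⟨fun n => Γ (n + 1), Ty.arr (Γ 0) τ, TJ.abs ?_⟩
      have : consC (Γ 0) (fun n => Γ (n + 1)) = Γ := by
        funext n
        cases n <;> rfl
      rwa [this]

theorem solvable_iff_typable {t : Lam} : Solvable t ↔ Typable t := by
  constructor
  · rintro ⟨h, hs, hh⟩
    obtain ⟨Γ, τ, hj⟩ := hnf_typable hh
    exact ⟨Γ, τ, tj_expand_steps hs hj⟩
  · rintro ⟨Γ, τ, hj⟩
    exact typable_solvable hj

theorem unsolvable_subst {u : Lam} (h : ¬ Solvable u) (k : ℕ) (v : Lam) :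
    ¬ Solvable (subst u k v) := by
  intro hs
  obtain ⟨Γ, τ, hj⟩ := solvable_iff_typable.1 hs
  obtain ⟨L, hu, _⟩ := anti_subst hj
  exact h (solvable_iff_typable.2 ⟨_, _, hu⟩)

theorem unsolvable_lift {u : Lam} (h : ¬ Solvable u) (d : ℕ) :
    ¬ Solvable (lift d u) := by
  intro hs
  obtain ⟨Γ, τ, hj⟩ := solvable_iff_typable.1 hs
  exact h (solvable_iff_typable.2 ⟨_, _, anti_lift hj⟩)

theorem tj_Omega_false {Γ : Ctx} {τ : Ty} (h : TJ Γ Omega τ) : False :=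
  unsolvable_Omega (typable_solvable h)

end Lam
namespace Lam

/-! ### Parallel βΩ-reduction and its diamond property -/

/-- Parallel βΩ-reduction. -/
inductive Par : Lam → Lam → Prop where
  | var (n : ℕ) : Par (var n) (var n)
  | app {a a' b b' : Lam} : Par a a' → Par b b' → Par (app a b) (app a' b')
  | abs {a a' : Lam} : Par a a' → Par (abs a) (abs a')
  | beta {a a' b b' : Lam} : Par a a' → Par b b' → Par (app (abs a) b) (subst a' 0 b')
  | omega {t : Lam} : ¬ Solvable t → Par t Omega

theorem par_refl : ∀ t, Par t t := by
  intro t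
  induction t with
  | var n => exact Par.var n
  | app a b iha ihb => exact Par.app iha ihb
  | abs a ih => exact Par.abs ih

theorem step_par {t s : Lam} (h : Step t s) : Par t s := by
  induction h with
  | beta a b => exact Par.beta (par_refl a) (par_refl b)
  | appL b _ ih => exact Par.app ih (par_refl b)
  | appR a _ ih => exact Par.app (par_refl a) ih
  | abs _ ih => exact Par.abs ih

theorem omegaStep_par {t s : Lam} (h : OmegaStep t s) : Par t s := by
  induction h with
  | unsolv h => exact Par.omega h
  | appL b _ ih => exact Par.app ih (par_refl b)
  | appR a _ ih => exact Par.app (par_refl a) ih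
  | abs _ ih => exact Par.abs ih

theorem bostep_par {t s : Lam} (h : BOStep t s) : Par t s := by
  rcases h with h | h
  · exact step_par h
  · exact omegaStep_par h

theorem bosteps_appL {a a' : Lam} (b : Lam) (h : BOSteps a a') :
    BOSteps (app a b) (app a' b) := by
  induction h with
  | refl => exact Relation.ReflTransGen.refl
  | tail _ h2 ih =>
      refine ih.tail ?_
      rcases h2 with h2 | h2
      · exact Or.inl (Step.appL _ h2)
      · exact Or.inr (OmegaStep.appL _ h2)

theorem bosteps_appR (a : Lam) {b b' : Lam} (h : BOSteps b b') :
    BOSteps (app a b) (app a b') := by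
  induction h with
  | refl => exact Relation.ReflTransGen.refl
  | tail _ h2 ih =>
      refine ih.tail ?_
      rcases h2 with h2 | h2
      · exact Or.inl (Step.appR _ h2)
      · exact Or.inr (OmegaStep.appR _ h2)

theorem bosteps_abs {a a' : Lam} (h : BOSteps a a') : BOSteps (abs a) (abs a') := by
  induction h with
  | refl => exact Relation.ReflTransGen.refl
  | tail _ h2 ih =>
      refine ih.tail ?_
      rcases h2 with h2 | h2
      · exact Or.inl (Step.abs h2)
      · exact Or.inr (OmegaStep.abs h2)

theorem par_bosteps {t s : Lam} (h : Par t s) : BOSteps t s := by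
  induction h with
  | var n => exact Relation.ReflTransGen.refl
  | app _ _ iha ihb => exact ((bosteps_appL _ iha).trans (bosteps_appR _ ihb))
  | @abs a a' _ ih => exact bosteps_abs ih
  | @beta a a' b b' _ _ iha ihb =>
      exact (((bosteps_appL b (bosteps_abs iha)).trans (bosteps_appR _ ihb)).tail
        (Or.inl (Step.beta a' b')))
  | omega h => exact Relation.ReflTransGen.single (Or.inr (OmegaStep.unsolv h))

end Lam
namespace Lam

theorem par_tj_expand {t s : Lam} (h : Par t s) :
    ∀ {Γ : Ctx} {τ : Ty}, TJ Γ s τ → TJ Γ t τ := by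
  induction h with
  | var n => exact fun h => h
  | app _ _ iha ihb =>
      intro Γ τ h
      cases h with
      | app ha hb => exact TJ.app (iha ha) (fun σ hσ => ihb (hb σ hσ))
  | abs _ ih =>
      intro Γ τ h
      cases h with
      | abs ha => exact TJ.abs (ih ha)
  | beta _ _ iha ihb =>
      intro Γ τ h
      obtain ⟨L, ha, hv⟩ := anti_subst h
      have hctx : insC 0 L Γ = consC L Γ := by
        funext n
        cases n with
        | zero => simp [insC, consC]
        | succ m => simp [insC, consC]
      rw [hctx] at ha
      exact TJ.app (TJ.abs (iha ha)) (fun σ hσ => ihb (hv σ hσ))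
  | omega h =>
      intro Γ τ hj
      exact absurd hj (fun hj => tj_Omega_false hj)

theorem par_unsolv {t s : Lam} (h : Par t s) (ht : ¬ Solvable t) : ¬ Solvable s := by
  intro hs
  obtain ⟨Γ, τ, hj⟩ := solvable_iff_typable.1 hs
  exact ht (solvable_iff_typable.2 ⟨Γ, τ, par_tj_expand h hj⟩)

theorem par_lift {t s : Lam} (h : Par t s) : ∀ d, Par (lift d t) (lift d s) := by
  induction h with
  | var n => exact fun d => par_refl _
  | app _ _ iha ihb => exact fun d => Par.app (iha d) (ihb d)
  | abs _ ih => exact fun d => Par.abs (ih (d + 1))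
  | @beta a a' b b' _ _ iha ihb =>
      intro d
      rw [subst_lift]
      exact Par.beta (iha (d + 1)) (ihb d)
  | omega h =>
      intro d
      rw [lift_Omega]
      exact Par.omega (unsolvable_lift h d)

theorem par_subst {a a' : Lam} (h : Par a a') :
    ∀ {k : ℕ} {b b' : Lam}, Par b b' → Par (subst a k b) (subst a' k b') := by
  induction h with
  | var n =>
      intro k b b' hb
      rw [subst, subst]
      by_cases h1 : n = k
      · rw [if_pos h1, if_pos h1]; exact hb
      · rw [if_neg h1, if_neg h1]
        split <;> exact par_refl _
  | app _ _ iha ihb =>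
      intro k b b' hb
      exact Par.app (iha hb) (ihb hb)
  | abs _ ih =>
      intro k b b' hb
      exact Par.abs (ih (par_lift hb 0))
  | @beta a₀ a₀' c c' _ _ iha ihc =>
      intro k b b' hb
      rw [show subst (app (abs a₀) c) k b
          = app (abs (subst a₀ (k + 1) (lift 0 b))) (subst c k b) from rfl]
      rw [subst_subst]
      exact Par.beta (iha (par_lift hb 0)) (ihc hb)
  | @omega t h =>
      intro k b b' hb
      rw [subst_Omega]
      exact Par.omega (unsolvable_subst h k b)

open Classical in
/-- Takahashi's complete development for βΩ-reduction. -/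
noncomputable def dev : Lam → Lam
  | var n => var n
  | app (abs a) b => if Solvable (app (abs a) b) then subst (dev a) 0 (dev b) else Omega
  | app (var n) b => if Solvable (app (var n) b) then app (var n) (dev b) else Omega
  | app (app c d) b => if Solvable (app (app c d) b) then app (dev (app c d)) (dev b) else Omega
  | abs a => if Solvable (abs a) then abs (dev a) else Omega

theorem dev_var (n : ℕ) : dev (var n) = var n := by simp [dev]

theorem dev_unsolv {t : Lam} (h : ¬ Solvable t) : dev t = Omega := by
  cases t with
  | var n => exact absurd (solvable_var n) h
  | abs a => simp [dev, if_neg h]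
  | app a b =>
      cases a with
      | var n => simp [dev, if_neg h]
      | abs a₀ => simp [dev, if_neg h]
      | app c d => simp [dev, if_neg h]

theorem dev_abs {a : Lam} (h : Solvable (abs a)) : dev (abs a) = abs (dev a) := by
  simp [dev, if_pos h]

theorem dev_beta {a b : Lam} (h : Solvable (app (abs a) b)) :
    dev (app (abs a) b) = subst (dev a) 0 (dev b) := by
  simp [dev, if_pos h]

theorem dev_app_ne {a b : Lam} (hne : ∀ c, a ≠ abs c) (h : Solvable (app a b)) :
    dev (app a b) = app (dev a) (dev b) := by
  cases a with
  | var n => simp [dev, if_pos h]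
  | abs a₀ => exact absurd rfl (hne a₀)
  | app c d => simp [dev, if_pos h]

theorem size_pos : ∀ t : Lam, 1 ≤ size t := by
  intro t
  cases t <;> simp [size]

theorem par_triangle : ∀ (t s : Lam), Par t s → Par s (dev t) := by
  suffices H : ∀ (n : ℕ) (t s : Lam), size t ≤ n → Par t s → Par s (dev t) from
    fun t s h => H (size t) t s le_rfl h
  intro n
  induction n with
  | zero => intro t s hs h; cases t <;> simp [size] at hs
  | succ n ih =>
      intro t s hsize h
      by_cases hsol : Solvable t
      · cases h with
        | var m => rw [dev_var]; exact Par.var m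
        | @abs a a' ha =>
            rw [dev_abs hsol]
            exact Par.abs (ih a a' (by simp [size] at hsize; omega) ha)
        | @app a a' b b' ha hb =>
            have hszb : size b ≤ n := by simp [size] at hsize; omega
            cases a with
            | abs a₀ =>
                have hsza : size a₀ ≤ n := by simp [size] at hsize; omega
                cases ha with
                | abs ha₀ =>
                    rw [dev_beta hsol]
                    exact Par.beta (ih a₀ _ hsza ha₀) (ih b b' hszb hb)
                | omega hn =>
                    rw [dev_beta hsol]
                    have hna : ¬ Solvable a₀ := fun hs => hn (solvable_abs_iff.2 hs)
                    rw [dev_unsolv hna, subst_Omega]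
                    exact Par.omega (unsolvable_appOmega b')
            | var m =>
                rw [dev_app_ne (fun c h => by cases h) hsol]
                refine Par.app (ih _ a' ?_ ha) (ih b b' hszb hb)
                have := size_pos b
                simp [size] at hsize ⊢
                omega
            | app c d =>
                rw [dev_app_ne (fun c h => by cases h) hsol]
                refine Par.app (ih _ a' ?_ ha) (ih b b' hszb hb)
                have := size_pos b
                simp [size] at hsize ⊢
                omega
        | @beta a a' b b' ha hb =>
            have hsza : size a ≤ n := by simp [size] at hsize; omega
            have hszb : size b ≤ n := by simp [size] at hsize; omega
            rw [dev_beta hsol]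
            exact par_subst (ih a a' hsza ha) (ih b b' hszb hb)
        | omega hn => exact absurd hsol hn
      · rw [dev_unsolv hsol]
        exact Par.omega (par_unsolv h hsol)

end Lam
namespace Lam

theorem par_diamond {t a b : Lam} (ha : Par t a) (hb : Par t b) :
    ∃ c, Par a c ∧ Par b c :=
  ⟨dev t, par_triangle t a ha, par_triangle t b hb⟩

theorem rtgPar_bosteps {t s : Lam} (h : Relation.ReflTransGen Par t s) : BOSteps t s := by
  induction h with
  | refl => exact Relation.ReflTransGen.refl
  | tail _ h2 ih => exact ih.trans (par_bosteps h2)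

theorem bosteps_rtgPar {t s : Lam} (h : BOSteps t s) : Relation.ReflTransGen Par t s :=
  Relation.ReflTransGen.mono (r := BOStep) (p := Par) (fun _ _ h => bostep_par h) _ _ h

end Lam

open Lam in
/-- `▷_{βΩ}*` satisfies the Church–Rosser property. -/
theorem betaOmega_churchRosser (t t₁ t₂ : Lam) (h1 : BOSteps t t₁) (h2 : BOSteps t t₂) :
    ∃ t₃, BOSteps t₁ t₃ ∧ BOSteps t₂ t₃ := by
  have key : ∀ a b c : Lam, Par a b → Par a c →
      ∃ d, Relation.ReflGen Par b d ∧ Relation.ReflTransGen Par c d := by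
    intro a b c hab hac
    obtain ⟨d, hbd, hcd⟩ := par_diamond hab hac
    exact ⟨d, Relation.ReflGen.single hbd, Relation.ReflTransGen.single hcd⟩
  obtain ⟨t₃, h13, h23⟩ :=
    Relation.church_rosser key (bosteps_rtgPar h1) (bosteps_rtgPar h2)
  exact ⟨t₃, rtgPar_bosteps h13, rtgPar_bosteps h23⟩
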